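/- On the symmetric group S_n with uniform probability measure, the number of cycles of a permutation σ equals X_1(σ) + X_2(σ) + ... + X_n(σ), where X_k(σ) is the indicator that the projection of σ to S_k fixes the letter k. -/

import Mathlib

open Finset
open scoped Classical

/-- One projection step `S_{m+1} → S_m`: delete the top letter (the letter `m+1`,
i.e. the element `Fin.last m`) from its cycle. -/
def projStep {m : ℕ} (σ : Equiv.Perm (Fin (m + 1))) : Equiv.Perm (Fin m) :=
  Equiv.removeNone (finSuccEquivLast.permCongr σ)

/-- The composed projection `S_{k+j} → S_k`, deleting the letters `k+j, ..., k+1`. -/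
def projTo (k : ℕ) : (j : ℕ) → Equiv.Perm (Fin (k + j)) → Equiv.Perm (Fin k)
  | 0, σ => σ
  | j + 1, σ => projTo k j (projStep σ)

/-- `Xfun n k σ` is the indicator that the projection of `σ` to `S_k` fixes the
letter `k` (the top element of `Fin k`). -/
def Xfun (n k : ℕ) (σ : Equiv.Perm (Fin n)) : ℕ :=
  if h : 1 ≤ k ∧ k ≤ n then
    if projTo k (n - k) ((finCongr (by omega : n = k + (n - k))).permCongr σ)
        ⟨k - 1, by omega⟩ = (⟨k - 1, by omega⟩ : Fin k) then 1 else 0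
  else 0

/-- The number of cycles of `σ` (counting all orbits, i.e. nontrivial cycles
together with fixed points). -/
def cycleCount {n : ℕ} (σ : Equiv.Perm (Fin n)) : ℕ :=
  σ.cycleType.card + (Finset.univ.filter fun x => σ x = x).card

/-! ### Auxiliary material -/

open Equiv Equiv.Perm

/-- Orbit count via cycle type and support. -/
noncomputable def cc {α : Type*} [Fintype α] [DecidableEq α] (f : Equiv.Perm α) : ℕ :=
  Multiset.card f.cycleType + (Fintype.card α - f.support.card)

lemma cycleCount_eq_cc {n : ℕ} (σ : Equiv.Perm (Fin n)) : cycleCount σ = cc σ := by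
  have hsupp : σ.support = Finset.univ.filter fun x => ¬ σ x = x := by
    ext y; simp [Equiv.Perm.mem_support]
  have h := Finset.card_filter_add_card_filter_not
    (s := (Finset.univ : Finset (Fin n))) (p := fun x => σ x = x)
  rw [← hsupp] at h
  have hle : σ.support.card ≤ Fintype.card (Fin n) := Finset.card_le_univ _
  unfold cycleCount cc
  have : (Finset.univ.filter fun x => σ x = x).card
      = Fintype.card (Fin n) - σ.support.card := by
    simp only [Finset.card_univ] at h; omega
  rw [this]

lemma cc_swap_mul {α : Type*} [Fintype α] [DecidableEq α] (f : Equiv.Perm α) (x : α)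
    (hx : f x ≠ x) : cc (Equiv.swap x (f x) * f) = cc f + 1 := by
  classical
  set c := f.cycleOf x with hc_def
  have hc : c.IsCycle := f.isCycle_cycleOf hx
  have hcx : c x = f x := f.cycleOf_apply_self x
  have hcxne : c x ≠ x := by rw [hcx]; exact hx
  have key : ∀ y, c y ≠ y → c y = f y := by
    intro y hy
    have hy' : y ∈ c.support := Equiv.Perm.mem_support.2 hy
    have hsc : f.SameCycle x y := (Equiv.Perm.mem_support_cycleOf_iff.1 hy').1
    rw [hc_def, Equiv.Perm.cycleOf_apply, if_pos hsc]
  set d := c⁻¹ * f with hd_def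
  have hf : f = c * d := by rw [hd_def]; group
  have hdc : Equiv.Perm.Disjoint c d := by
    intro y
    by_cases h : c y = y
    · exact Or.inl h
    · refine Or.inr ?_
      have := key y h
      rw [hd_def, Equiv.Perm.mul_apply, ← this]; exact c.symm_apply_apply y
  have hfx_mem : c (f x) ≠ f x := by
    have hsc : f.SameCycle x (f x) := ⟨1, by simp⟩
    have : c (f x) = f (f x) := by rw [hc_def, Equiv.Perm.cycleOf_apply, if_pos hsc]
    rw [this]
    intro h
    exact hx (f.injective h)
  set c' := Equiv.swap x (f x) * c with hc'_def
  have hdc' : Equiv.Perm.Disjoint c' d := by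
    intro y
    by_cases h : c y = y
    · refine Or.inl ?_
      have hyx : y ≠ x := fun hyx => hcxne (hyx ▸ h)
      have hyfx : y ≠ f x := fun hyfx => hfx_mem (hyfx ▸ h)
      rw [hc'_def, Equiv.Perm.mul_apply, h, Equiv.swap_apply_of_ne_of_ne hyx hyfx]
    · rcases hdc y with h' | h'
      · exact absurd h' h
      · exact Or.inr h'
  have hg : Equiv.swap x (f x) * f = c' * d := by
    rw [hc'_def, hf, mul_assoc]
  have hxsupp : x ∈ c.support := Equiv.Perm.mem_support.2 hcxne
  set m := c.support.card with hm_def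
  have hm2 : 2 ≤ m := hc.two_le_card_support
  have hcT : c.cycleType = {m} := by rw [hc.cycleType]
  have hcTf : f.cycleType = {m} + d.cycleType := by
    rw [hf, Equiv.Perm.Disjoint.cycleType_mul hdc, hcT]
  set s := d.cycleType.sum with hs_def
  set t := Multiset.card d.cycleType with ht_def
  have hsum_f : f.support.card = m + s := by
    rw [← Equiv.Perm.sum_cycleType, hcTf]; simp [hs_def]
  have hfle : f.support.card ≤ Fintype.card α := Finset.card_le_univ _
  have hcardf : Multiset.card f.cycleType = 1 + t := by rw [hcTf]; simp [ht_def]; omega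
  by_cases hffx : c (c x) = x
  · -- the cycle of x is a transposition
    have hC2 : c ^ 2 = 1 := by
      ext y
      by_cases hy : c y = y
      · simp [pow_two, Equiv.Perm.mul_apply, hy]
      · obtain ⟨i, hi⟩ := hc.sameCycle hcxne hy
        have hx2 : (c ^ 2) x = x := by
          rw [pow_two, Equiv.Perm.mul_apply, hffx]
        have hcomm : c ^ (2 : ℕ) * c ^ i = c ^ i * c ^ (2 : ℕ) := by
          rw [← zpow_natCast, ← zpow_add, ← zpow_add, add_comm]
        calc (c ^ 2) y = (c ^ 2) ((c ^ i) x) := by rw [hi]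
          _ = (c ^ (2:ℕ) * c ^ i) x := rfl
          _ = (c ^ i * c ^ (2:ℕ)) x := by rw [hcomm]
          _ = (c ^ i) ((c ^ 2) x) := rfl
          _ = (c ^ i) x := by rw [hx2]
          _ = y := hi
    have hmle : m ≤ 2 := by
      have h1 : orderOf c ∣ 2 := orderOf_dvd_of_pow_eq_one hC2
      have h2 : orderOf c = m := hc.orderOf
      exact Nat.le_of_dvd (by norm_num) (h2 ▸ h1)
    have hm : m = 2 := le_antisymm hmle hm2
    have hsub : ({x, f x} : Finset α) ⊆ c.support := by
      intro y hy
      simp only [Finset.mem_insert, Finset.mem_singleton] at hy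
      rcases hy with rfl | rfl
      · exact hxsupp
      · exact Equiv.Perm.mem_support.2 hfx_mem
    have hcard2 : ({x, f x} : Finset α).card = 2 := by
      rw [Finset.card_insert_of_notMem (by simp [Ne.symm hx]), Finset.card_singleton]
    have hsupp_eq : c.support = {x, f x} := by
      apply (Finset.eq_of_subset_of_card_le hsub (by omega)).symm
    have hcfx : c (f x) = x := by rw [← hcx, hffx]
    have hc'1 : c' = 1 := by
      ext y
      rw [hc'_def]
      by_cases h1 : y = x
      · subst h1
        simp [Equiv.Perm.mul_apply, hcx, Equiv.swap_apply_right]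
      · by_cases h2 : y = f x
        · subst h2
          simp [Equiv.Perm.mul_apply, hcfx, Equiv.swap_apply_left]
        · have hy : y ∉ c.support := by
            rw [hsupp_eq]; simp [h1, h2]
          have hy' : c y = y := Equiv.Perm.notMem_support.1 hy
          simp [Equiv.Perm.mul_apply, hy', Equiv.swap_apply_of_ne_of_ne h1 h2]
    have hcTg : (Equiv.swap x (f x) * f).cycleType = d.cycleType := by
      rw [hg, hc'1, one_mul]
    have hsum_g : (Equiv.swap x (f x) * f).support.card = s := by
      rw [← Equiv.Perm.sum_cycleType, hcTg]
    unfold cc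
    rw [hcTg, hsum_g, hcardf, hsum_f]
    omega
  · -- the cycle of x has length at least 3
    have hc' : c'.IsCycle := by
      have := hc.swap_mul hcxne hffx
      rwa [hcx] at this
    have hsupp_c' : c'.support = c.support \ {x} := by
      rw [hc'_def, ← hcx, Equiv.Perm.support_swap_mul_eq c x hffx]
    have hcard_c' : c'.support.card = m - 1 := by
      rw [hsupp_c', Finset.card_sdiff_of_subset (Finset.singleton_subset_iff.2 hxsupp),
        Finset.card_singleton]
    have hcTg : (Equiv.swap x (f x) * f).cycleType = {m - 1} + d.cycleType := by
      rw [hg, Equiv.Perm.Disjoint.cycleType_mul hdc', hc'.cycleType, hcard_c']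
    have hsum_g : (Equiv.swap x (f x) * f).support.card = (m - 1) + s := by
      rw [← Equiv.Perm.sum_cycleType, hcTg]; simp [hs_def]
    have hcardg : Multiset.card (Equiv.swap x (f x) * f).cycleType = 1 + t := by
      rw [hcTg]; simp [ht_def]; omega
    unfold cc
    rw [hcardg, hsum_g, hcardf, hsum_f]
    omega

/-- The equivalence between `Fin n` and the non-`last` elements of `Fin (n+1)`. -/
def lastEquiv (n : ℕ) : Fin n ≃ {x : Fin (n + 1) // x ≠ Fin.last n} where
  toFun i := ⟨i.castSucc, (Fin.castSucc_lt_last i).ne⟩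
  invFun x := x.1.castPred x.2
  left_inv i := by simp
  right_inv x := by simp

lemma cc_extendDomain {n : ℕ} (τ : Equiv.Perm (Fin n)) :
    cc (τ.extendDomain (lastEquiv n)) = cc τ + 1 := by
  unfold cc
  rw [Equiv.Perm.cycleType_extendDomain, Equiv.Perm.card_support_extend_domain]
  have hle : τ.support.card ≤ n := by
    have := Finset.card_le_univ τ.support
    simpa using this
  simp only [Fintype.card_fin]
  omega

lemma castSucc_projStep {n : ℕ} (σ : Equiv.Perm (Fin (n + 1))) (i : Fin n) :
    Fin.castSucc (projStep σ i) =
      if σ (Fin.castSucc i) = Fin.last n then σ (Fin.last n) else σ (Fin.castSucc i) := by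
  unfold projStep
  set e := finSuccEquivLast.permCongr σ with he
  by_cases h : σ (Fin.castSucc i) = Fin.last n
  · rw [if_pos h]
    have h1 : e (some i) = none := by
      simp [he, Equiv.permCongr_apply, h]
    have h2 := Equiv.removeNone_none e h1
    have h3 : e none = finSuccEquivLast (σ (Fin.last n)) := by
      simp [he, Equiv.permCongr_apply]
    rw [h3] at h2
    have := congrArg finSuccEquivLast.symm h2
    simpa using this
  · rw [if_neg h]
    have h1 : e (some i) = some ((σ (Fin.castSucc i)).castPred h) := by
      simp only [he, Equiv.permCongr_apply, finSuccEquivLast_symm_some]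
      conv_lhs => rw [← Fin.castSucc_castPred _ h]
      rw [finSuccEquivLast_castSucc]
    have h2 := Equiv.removeNone_some e ⟨_, h1⟩
    rw [h1] at h2
    have h3 : Equiv.removeNone e i = (σ (Fin.castSucc i)).castPred h :=
      Option.some_injective _ h2
    rw [h3, Fin.castSucc_castPred]

lemma extend_projStep {n : ℕ} (σ : Equiv.Perm (Fin (n + 1))) :
    (projStep σ).extendDomain (lastEquiv n) =
      if σ (Fin.last n) = Fin.last n then σ
      else Equiv.swap (Fin.last n) (σ (Fin.last n)) * σ := by
  have hext_last : (projStep σ).extendDomain (lastEquiv n) (Fin.last n) = Fin.last n :=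
    Equiv.Perm.extendDomain_apply_not_subtype _ _ (by simp)
  have hext_cs : ∀ i : Fin n, (projStep σ).extendDomain (lastEquiv n) (Fin.castSucc i)
      = Fin.castSucc (projStep σ i) := by
    intro i
    have : Fin.castSucc i = ((lastEquiv n) i : Fin (n+1)) := rfl
    rw [this, Equiv.Perm.extendDomain_apply_image]
    rfl
  by_cases h : σ (Fin.last n) = Fin.last n
  · rw [if_pos h]
    ext x
    induction x using Fin.lastCases with
    | last => rw [hext_last, h]
    | cast i =>
      rw [hext_cs i, castSucc_projStep]
      have hne : σ (Fin.castSucc i) ≠ Fin.last n := by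
        intro hc
        exact absurd (σ.injective (hc.trans h.symm)) (Fin.castSucc_lt_last i).ne
      rw [if_neg hne]
  · rw [if_neg h]
    ext x
    induction x using Fin.lastCases with
    | last =>
      rw [hext_last, Equiv.Perm.mul_apply, Equiv.swap_apply_right]
    | cast i =>
      rw [hext_cs i, castSucc_projStep, Equiv.Perm.mul_apply]
      by_cases hc : σ (Fin.castSucc i) = Fin.last n
      · rw [if_pos hc, hc, Equiv.swap_apply_left]
      · rw [if_neg hc]
        have hne2 : σ (Fin.castSucc i) ≠ σ (Fin.last n) := by
          intro hcc
          exact absurd (σ.injective hcc) (Fin.castSucc_lt_last i).ne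
        rw [Equiv.swap_apply_of_ne_of_ne hc hne2]

/-- Key recursion for `cc` under one projection step. -/
lemma cc_projStep {n : ℕ} (σ : Equiv.Perm (Fin (n + 1))) :
    cc σ = cc (projStep σ) + (if σ (Fin.last n) = Fin.last n then 1 else 0) := by
  have hext := extend_projStep σ
  by_cases h : σ (Fin.last n) = Fin.last n
  · rw [if_pos h] at hext
    rw [if_pos h]
    conv_lhs => rw [← hext]
    rw [cc_extendDomain]
  · rw [if_neg h] at hext
    rw [if_neg h, add_zero]
    have h1 : cc (Equiv.swap (Fin.last n) (σ (Fin.last n)) * σ) = cc σ + 1 :=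
      cc_swap_mul σ (Fin.last n) h
    have h2 : cc (Equiv.swap (Fin.last n) (σ (Fin.last n)) * σ) = cc (projStep σ) + 1 := by
      rw [← hext, cc_extendDomain]
    omega

lemma projStep_congr {m m' : ℕ} (h : m = m') (σ : Equiv.Perm (Fin (m + 1))) :
    projStep ((finCongr (by omega : m + 1 = m' + 1)).permCongr σ)
      = (finCongr h).permCongr (projStep σ) := by
  subst h
  have h1 : (finCongr (rfl : m + 1 = m + 1)) = Equiv.refl (Fin (m + 1)) := by
    ext x; simp
  have h2 : (finCongr (rfl : m = m)) = Equiv.refl (Fin m) := by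
    ext x; simp
  rw [h1, h2]
  simp [← Equiv.Perm.one_def]

lemma projTo_congr (k : ℕ) {j j' : ℕ} (h : j = j') (σ : Equiv.Perm (Fin (k + j))) :
    projTo k j' ((finCongr (by omega : k + j = k + j')).permCongr σ) = projTo k j σ := by
  subst h
  have h1 : (finCongr (rfl : k + j = k + j)) = Equiv.refl (Fin (k + j)) := by
    ext x; simp
  rw [h1]
  simp [← Equiv.Perm.one_def]

lemma permCongr_val {m m' : ℕ} (h : m = m') (σ : Equiv.Perm (Fin m)) (x : Fin m') :
    (((finCongr h).permCongr σ) x : ℕ) = (σ ⟨x.1, by omega⟩ : ℕ) := by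
  subst h
  have hx : (finCongr (rfl : m = m)).symm x = ⟨x.1, x.2⟩ := by
    apply Fin.ext; simp
  rw [Equiv.permCongr_apply, hx]
  simp

lemma permCongr_comp {a b c : ℕ} (h1 : a = b) (h2 : b = c) (σ : Equiv.Perm (Fin a)) :
    (finCongr h2).permCongr ((finCongr h1).permCongr σ)
      = (finCongr (h1.trans h2)).permCongr σ := by
  subst h1; subst h2
  ext x
  simp

lemma Xfun_cond {n k : ℕ} (h1 : 1 ≤ k) (h2 : k ≤ n) (σ : Equiv.Perm (Fin n)) :
    Xfun n k σ =
      if projTo k (n - k) ((finCongr (by omega : n = k + (n - k))).permCongr σ)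
          ⟨k - 1, by omega⟩ = (⟨k - 1, by omega⟩ : Fin k) then 1 else 0 := by
  rw [Xfun, dif_pos ⟨h1, h2⟩]

lemma Xfun_top {n : ℕ} (σ : Equiv.Perm (Fin (n + 1))) :
    Xfun (n + 1) (n + 1) σ = if σ (Fin.last n) = Fin.last n then 1 else 0 := by
  rw [Xfun_cond (by omega) (le_refl _)]
  have h0 : n + 1 - (n + 1) = 0 := by omega
  rw [← projTo_congr (n + 1) h0
    ((finCongr (by omega : n + 1 = (n + 1) + (n + 1 - (n + 1)))).permCongr σ)]
  simp only [projTo]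
  rw [permCongr_comp]
  apply if_congr _ rfl rfl
  simp [Equiv.permCongr_apply, Fin.ext_iff, Fin.last]

lemma Xfun_step {n k : ℕ} (hk1 : 1 ≤ k) (hk : k ≤ n) (σ : Equiv.Perm (Fin (n + 1))) :
    Xfun (n + 1) k σ = Xfun n k (projStep σ) := by
  rw [Xfun_cond hk1 (by omega), Xfun_cond hk1 hk]
  have hj : n + 1 - k = (n - k) + 1 := by omega
  have key : projTo k (n + 1 - k) ((finCongr (by omega : n + 1 = k + (n + 1 - k))).permCongr σ)
      = projTo k (n - k) ((finCongr (by omega : n = k + (n - k))).permCongr (projStep σ)) := by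
    rw [← projTo_congr k hj ((finCongr (by omega : n + 1 = k + (n + 1 - k))).permCongr σ)]
    simp only [projTo]
    rw [permCongr_comp]
    congr 1
    exact projStep_congr (by omega : n = k + (n - k)) σ
  rw [key]

/-- The number of cycles of `σ ∈ S_n` equals `X_1(σ) + ⋯ + X_n(σ)`. -/
theorem cycleCount_eq_sum_Xfun (n : ℕ) (σ : Equiv.Perm (Fin n)) :
    cycleCount σ = ∑ k ∈ Finset.Icc 1 n, Xfun n k σ := by
  rw [cycleCount_eq_cc]
  induction n with
  | zero =>
    have hσ : σ = 1 := Subsingleton.elim _ _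
    simp [cc, hσ]
  | succ n ih =>
    have hIcc : Finset.Icc 1 (n + 1) = insert (n + 1) (Finset.Icc 1 n) := by
      ext m; simp only [Finset.mem_Icc, Finset.mem_insert]; omega
    rw [hIcc, Finset.sum_insert (by simp)]
    have hsum : ∑ k ∈ Finset.Icc 1 n, Xfun (n + 1) k σ
        = ∑ k ∈ Finset.Icc 1 n, Xfun n k (projStep σ) := by
      apply Finset.sum_congr rfl
      intro k hk
      rw [Finset.mem_Icc] at hk
      exact Xfun_step hk.1 hk.2 σ
    rw [hsum, ← ih (projStep σ), Xfun_top, cc_projStep σ]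
    omega
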